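/- arXiv:1211.4664 — 2 statements merged into one kernel-verified Lean document; each statement's English description precedes it below -/
import Mathlib

section
/- (Criticality implies the canonical dual equations) Fix μ > 0 and (ς̄,σ̄) with ς̄ > −λ, σ̄ > 0 and G_μ(ς̄,σ̄) positive definite, and set x̄ = G_μ(ς̄,σ̄)⁻¹(c − σ̄b). If the Fréchet derivative of P^d_μ vanishes at (ς̄,σ̄), then ς̄ = ½|Bx̄|² − λ and h(x̄) = 1/μ, and consequently P^d_μ(ς̄,σ̄) = P_μ(x̄). -/
open Matrix Set Filter

noncomputable section

/-- `q(x) = ½ xᵀQx − cᵀx`. -/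
def qfun {n : ℕ} (Q : Matrix (Fin n) (Fin n) ℝ) (c : Fin n → ℝ) (x : Fin n → ℝ) : ℝ :=
  (1/2) * (x ⬝ᵥ (Q *ᵥ x)) - c ⬝ᵥ x

/-- `g(x) = ½ (½|Bx|² − λ)²`. -/
def gfun {n m : ℕ} (B : Matrix (Fin m) (Fin n) ℝ) (lam : ℝ) (x : Fin n → ℝ) : ℝ :=
  (1/2) * ((1/2) * ((B *ᵥ x) ⬝ᵥ (B *ᵥ x)) - lam)^2

/-- `h(x) = ½ xᵀHx − bᵀx`. -/
def hfun {n : ℕ} (H : Matrix (Fin n) (Fin n) ℝ) (b : Fin n → ℝ) (x : Fin n → ℝ) : ℝ :=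
  (1/2) * (x ⬝ᵥ (H *ᵥ x)) - b ⬝ᵥ x

/-- `G_μ(ς,σ) = Q + μς BᵀB − σH`. -/
def Gmu {n m : ℕ} (Q : Matrix (Fin n) (Fin n) ℝ) (B : Matrix (Fin m) (Fin n) ℝ)
    (H : Matrix (Fin n) (Fin n) ℝ) (μ ς σ : ℝ) : Matrix (Fin n) (Fin n) ℝ :=
  Q + (μ * ς) • (Bᵀ * B) - σ • H

/-- The dual feasible set `S_μ⁺`. -/
def Smu {n m : ℕ} (Q : Matrix (Fin n) (Fin n) ℝ) (B : Matrix (Fin m) (Fin n) ℝ)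
    (H : Matrix (Fin n) (Fin n) ℝ) (lam μ : ℝ) : Set (ℝ × ℝ) :=
  {p : ℝ × ℝ | -lam ≤ p.1 ∧ 0 ≤ p.2 ∧ (Gmu Q B H μ p.1 p.2).PosDef}

/-- The canonical dual function `P^d_μ(ς,σ)`. -/
def Pd {n m : ℕ} (Q : Matrix (Fin n) (Fin n) ℝ) (B : Matrix (Fin m) (Fin n) ℝ)
    (H : Matrix (Fin n) (Fin n) ℝ) (lam : ℝ) (c b : Fin n → ℝ) (μ ς σ : ℝ) : ℝ :=
  -(1/2) * ((c - σ • b) ⬝ᵥ ((Gmu Q B H μ ς σ)⁻¹ *ᵥ (c - σ • b)))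
    - μ * lam * ς - (μ/2) * ς^2 + σ/μ

/-- The total complementary function `Ξ_μ(x,ς,σ)`. -/
def Xi {n m : ℕ} (Q : Matrix (Fin n) (Fin n) ℝ) (B : Matrix (Fin m) (Fin n) ℝ)
    (H : Matrix (Fin n) (Fin n) ℝ) (lam : ℝ) (c b : Fin n → ℝ)
    (μ : ℝ) (x : Fin n → ℝ) (ς σ : ℝ) : ℝ :=
  (1/2) * (x ⬝ᵥ (Gmu Q B H μ ς σ *ᵥ x)) - (c - σ • b) ⬝ᵥ x
    - μ * lam * ς - (μ/2) * ς^2 + σ/μ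


lemma quadCont {n : ℕ} (M : Matrix (Fin n) (Fin n) ℝ) :
    Continuous (fun x : Fin n → ℝ => x ⬝ᵥ (M *ᵥ x)) := by
  simp only [dotProduct, Matrix.mulVec]
  fun_prop

lemma quad_min {n : ℕ} (hn : 0 < n) (M : Matrix (Fin n) (Fin n) ℝ) :
    ∃ u : Fin n → ℝ, u ⬝ᵥ u = 1 ∧
      ∀ x : Fin n → ℝ, (u ⬝ᵥ (M *ᵥ u)) * (x ⬝ᵥ x) ≤ x ⬝ᵥ (M *ᵥ x) := by
  have hcont1 : Continuous (fun x : Fin n → ℝ => x ⬝ᵥ x) := by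
    simp only [dotProduct]; fun_prop
  set S : Set (Fin n → ℝ) := {x | x ⬝ᵥ x = 1} with hS
  have hclosed : IsClosed S := isClosed_eq hcont1 continuous_const
  have hsub : S ⊆ Metric.closedBall 0 1 := by
    intro x hx
    simp only [Metric.mem_closedBall, dist_zero_right]
    rw [pi_norm_le_iff_of_nonneg (by norm_num)]
    intro i
    rw [Real.norm_eq_abs, abs_le_one_iff_mul_self_le_one]
    calc x i * x i ≤ ∑ j, x j * x j :=
          Finset.single_le_sum (f := fun j => x j * x j)
            (fun j _ => mul_self_nonneg _) (Finset.mem_univ i)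
      _ = 1 := hx
  have hcomp : IsCompact S :=
    (isCompact_closedBall (0 : Fin n → ℝ) 1).of_isClosed_subset hclosed hsub
  have hne : S.Nonempty := by
    refine ⟨Pi.single ⟨0, hn⟩ 1, ?_⟩
    simp [hS, dotProduct, Pi.single_apply]
  obtain ⟨u, huS, humin⟩ := hcomp.exists_isMinOn hne (quadCont M).continuousOn
  refine ⟨u, huS, fun x => ?_⟩
  by_cases hx : x = 0
  · simp [hx]
  · have hxx : (0:ℝ) < x ⬝ᵥ x := by
      rcases (Finset.sum_nonneg (fun j _ => mul_self_nonneg (x j))).lt_or_eq with h | h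
      · exact h
      · exact absurd (dotProduct_self_eq_zero.mp h.symm) hx
    set r := Real.sqrt (x ⬝ᵥ x) with hr
    have hrpos : 0 < r := Real.sqrt_pos.2 hxx
    have hr2 : r * r = x ⬝ᵥ x := Real.mul_self_sqrt hxx.le
    have hyS : (r⁻¹ • x) ∈ S := by
      simp only [hS, mem_setOf_eq, smul_dotProduct, dotProduct_smul,
        smul_eq_mul]
      field_simp
      linarith [hr2]
    have hval : (r⁻¹ • x) ⬝ᵥ (M *ᵥ (r⁻¹ • x)) = r⁻¹ * (r⁻¹ * (x ⬝ᵥ (M *ᵥ x))) := by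
      rw [Matrix.mulVec_smul, smul_dotProduct, dotProduct_smul]
      simp [smul_eq_mul]
    have h3 : u ⬝ᵥ (M *ᵥ u) ≤ (r⁻¹ • x) ⬝ᵥ (M *ᵥ (r⁻¹ • x)) := humin hyS
    rw [hval] at h3
    have h2 : (u ⬝ᵥ (M *ᵥ u)) * (r * r) ≤ x ⬝ᵥ (M *ᵥ x) := by
      have hrr : 0 < r * r := mul_pos hrpos hrpos
      have h4 : (u ⬝ᵥ (M *ᵥ u)) * (r * r) ≤ (r⁻¹ * (r⁻¹ * (x ⬝ᵥ (M *ᵥ x)))) * (r * r) :=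
        mul_le_mul_of_nonneg_right h3 hrr.le
      calc (u ⬝ᵥ (M *ᵥ u)) * (r * r) ≤ (r⁻¹ * (r⁻¹ * (x ⬝ᵥ (M *ᵥ x)))) * (r * r) := h4
        _ = x ⬝ᵥ (M *ᵥ x) := by field_simp
    rwa [hr2] at h2

lemma quad_abs_bound {n : ℕ} (hn : 0 < n) (M : Matrix (Fin n) (Fin n) ℝ) :
    ∃ C : ℝ, 0 ≤ C ∧ ∀ x : Fin n → ℝ, |x ⬝ᵥ (M *ᵥ x)| ≤ C * (x ⬝ᵥ x) := by
  obtain ⟨u, -, hu⟩ := quad_min hn M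
  obtain ⟨v, -, hv⟩ := quad_min hn (-M)
  set cm := u ⬝ᵥ (M *ᵥ u)
  set cm' := v ⬝ᵥ ((-M) *ᵥ v)
  refine ⟨max |cm| |cm'|, le_trans (abs_nonneg _) (le_max_left _ _), fun x => ?_⟩
  have hxx : (0:ℝ) ≤ x ⬝ᵥ x := Finset.sum_nonneg (fun j _ => mul_self_nonneg (x j))
  have h1 := hu x
  have h2 := hv x
  rw [Matrix.neg_mulVec, dotProduct_neg] at h2
  rw [abs_le]
  constructor
  · nlinarith [neg_abs_le cm, le_max_left |cm| |cm'|]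
  · nlinarith [neg_abs_le cm', le_max_right |cm| |cm'|]

lemma Gmu_isHermitian {n m : ℕ} (Q : Matrix (Fin n) (Fin n) ℝ) (hQ : Q.IsSymm)
    (B : Matrix (Fin m) (Fin n) ℝ) (H : Matrix (Fin n) (Fin n) ℝ) (hH : H.IsSymm)
    (μ ς σ : ℝ) : (Gmu Q B H μ ς σ).IsHermitian := by
  unfold Gmu
  simp only [Matrix.IsHermitian, conjTranspose_eq_transpose_of_trivial,
    Matrix.transpose_add, Matrix.transpose_sub, Matrix.transpose_smul,
    Matrix.transpose_mul, Matrix.transpose_transpose, hQ.eq, hH.eq]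

lemma Pd_eq_Xi {n m : ℕ} (Q : Matrix (Fin n) (Fin n) ℝ) (B : Matrix (Fin m) (Fin n) ℝ)
    (H : Matrix (Fin n) (Fin n) ℝ) (lam : ℝ) (c b : Fin n → ℝ) (μ ς σ : ℝ)
    (hpd : (Gmu Q B H μ ς σ).PosDef) :
    Pd Q B H lam c b μ ς σ
      = Xi Q B H lam c b μ ((Gmu Q B H μ ς σ)⁻¹ *ᵥ (c - σ • b)) ς σ ∧
    ∀ x : Fin n → ℝ,
      Xi Q B H lam c b μ ((Gmu Q B H μ ς σ)⁻¹ *ᵥ (c - σ • b)) ς σ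
        ≤ Xi Q B H lam c b μ x ς σ := by
  set G := Gmu Q B H μ ς σ with hG
  set y : Fin n → ℝ := c - σ • b with hy
  set xp : Fin n → ℝ := G⁻¹ *ᵥ y with hxp
  have hdet : IsUnit G.det := hpd.det_pos.ne'.isUnit
  have hGxp : G *ᵥ xp = y := by
    rw [hxp, Matrix.mulVec_mulVec, Matrix.mul_nonsing_inv _ hdet, Matrix.one_mulVec]
  have hGT : Gᵀ = G := by
    have := hpd.isHermitian
    rwa [Matrix.IsHermitian, conjTranspose_eq_transpose_of_trivial] at this
  have hsymmdot : ∀ v w : Fin n → ℝ, v ⬝ᵥ (G *ᵥ w) = w ⬝ᵥ (G *ᵥ v) := by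
    intro v w
    rw [Matrix.dotProduct_mulVec, ← Matrix.mulVec_transpose, hGT, dotProduct_comm]
  constructor
  · unfold Pd Xi
    rw [← hG, ← hy, ← hxp, hGxp, dotProduct_comm y xp]
    ring
  · intro x
    have hq : (0:ℝ) ≤ (x - xp) ⬝ᵥ (G *ᵥ (x - xp)) := by
      have := hpd.posSemidef.dotProduct_mulVec_nonneg (x - xp)
      simpa using this
    rw [Matrix.mulVec_sub, dotProduct_sub, sub_dotProduct,
      sub_dotProduct, hGxp] at hq
    have hswap : xp ⬝ᵥ (G *ᵥ x) = x ⬝ᵥ (G *ᵥ xp) := hsymmdot xp x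
    rw [hswap, hGxp] at hq
    unfold Xi
    rw [← hG, ← hy]
    have hcomm1 : xp ⬝ᵥ y = y ⬝ᵥ xp := dotProduct_comm _ _
    have hcomm2 : x ⬝ᵥ y = y ⬝ᵥ x := dotProduct_comm _ _
    have hxpGxp : xp ⬝ᵥ (G *ᵥ xp) = xp ⬝ᵥ y := by rw [hGxp]
    rw [hxpGxp]
    nlinarith [hq, hcomm1, hcomm2]

lemma posdef_nbhd {n m : ℕ} (hn : 0 < n) (Q : Matrix (Fin n) (Fin n) ℝ) (hQ : Q.IsSymm)
    (B : Matrix (Fin m) (Fin n) ℝ) (H : Matrix (Fin n) (Fin n) ℝ) (hH : H.IsSymm)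
    (μ ςb σb : ℝ) (hpd : (Gmu Q B H μ ςb σb).PosDef) :
    ∀ᶠ p : ℝ × ℝ in nhds (ςb, σb), (Gmu Q B H μ p.1 p.2).PosDef := by
  obtain ⟨u, hu1, hlow⟩ := quad_min hn (Gmu Q B H μ ςb σb)
  set ε := u ⬝ᵥ (Gmu Q B H μ ςb σb *ᵥ u) with hε
  have hu0 : u ≠ 0 := by
    intro h; rw [h] at hu1; simp at hu1
  have hεpos : 0 < ε := by
    have := hpd.dotProduct_mulVec_pos hu0
    simpa using this
  obtain ⟨C1, hC1, hB1⟩ := quad_abs_bound hn (Bᵀ * B)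
  obtain ⟨C2, hC2, hH2⟩ := quad_abs_bound hn H
  set D : ℝ := |μ| * C1 + C2 + 1 with hD
  have hDpos : 0 < D := by positivity
  set δ : ℝ := ε / 2 / D with hδ
  have hδpos : 0 < δ := by positivity
  have hδD : δ * D = ε / 2 := by
    field_simp [hδ]
    rw [hδ]; field_simp
  rw [Metric.eventually_nhds_iff]
  refine ⟨δ, hδpos, ?_⟩
  rintro ⟨ς, σ⟩ hdist
  have hd1 : |ς - ςb| < δ := by
    have := le_trans (le_max_left _ _) (le_of_lt hdist)
    simpa [Prod.dist_eq, Real.dist_eq] using lt_of_le_of_lt (le_max_left (dist ς ςb) (dist σ σb)) (by simpa [Prod.dist_eq] using hdist)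
  have hd2 : |σ - σb| < δ := by
    simpa [Real.dist_eq] using lt_of_le_of_lt (le_max_right (dist ς ςb) (dist σ σb)) (by simpa [Prod.dist_eq] using hdist)
  have hsplit : Gmu Q B H μ ς σ
      = Gmu Q B H μ ςb σb + (μ * (ς - ςb)) • (Bᵀ * B) - (σ - σb) • H := by
    unfold Gmu; module
  refine Matrix.PosDef.of_dotProduct_mulVec_pos (Gmu_isHermitian Q hQ B H hH μ ς σ) fun x hx => ?_
  have hxx : (0:ℝ) < x ⬝ᵥ x := by
    rcases (Finset.sum_nonneg (fun j _ => mul_self_nonneg (x j))).lt_or_eq with h | h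
    · exact h
    · exact absurd (dotProduct_self_eq_zero.mp h.symm) hx
  have hexp : x ⬝ᵥ (Gmu Q B H μ ς σ *ᵥ x)
      = x ⬝ᵥ (Gmu Q B H μ ςb σb *ᵥ x)
        + (μ * (ς - ςb)) * (x ⬝ᵥ ((Bᵀ * B) *ᵥ x))
        - (σ - σb) * (x ⬝ᵥ (H *ᵥ x)) := by
    rw [hsplit, Matrix.sub_mulVec, Matrix.add_mulVec, Matrix.smul_mulVec,
      Matrix.smul_mulVec, dotProduct_sub, dotProduct_add,
      dotProduct_smul, dotProduct_smul, smul_eq_mul, smul_eq_mul]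
  have ht1 : |(μ * (ς - ςb)) * (x ⬝ᵥ ((Bᵀ * B) *ᵥ x))| ≤ |μ| * δ * (C1 * (x ⬝ᵥ x)) := by
    rw [abs_mul, abs_mul]
    gcongr
    · exact hB1 x
  have ht2 : |(σ - σb) * (x ⬝ᵥ (H *ᵥ x))| ≤ δ * (C2 * (x ⬝ᵥ x)) := by
    rw [abs_mul]
    gcongr
    · exact hH2 x
  have h1 := (abs_le.mp ht1).1
  have h2 := (abs_le.mp ht2).2
  have hlowx := hlow x
  have hkey : 0 < x ⬝ᵥ (Gmu Q B H μ ς σ *ᵥ x) := by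
    rw [hexp]
    have hbound : |μ| * δ * (C1 * (x ⬝ᵥ x)) + δ * (C2 * (x ⬝ᵥ x)) ≤ (ε / 2) * (x ⬝ᵥ x) := by
      have : (|μ| * C1 + C2) * δ ≤ D * δ - δ := by
        rw [hD]; ring_nf; nlinarith [hδpos]
      nlinarith [hδD, hxx.le, hδpos]
    nlinarith [hlowx, hεpos, hxx]
  simpa using hkey

/-- criticality implies the canonical dual equations: if the
Fréchet derivative of `P^d_μ` vanishes at an interior point `(ς̄,σ̄)` of `S_μ⁺`,
then `ς̄ = ½|Bx̄|² − λ`, `h(x̄) = 1/μ`, and `P^d_μ(ς̄,σ̄) = P_μ(x̄)`. -/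
theorem stmt_14 {n m : ℕ} (hn : 0 < n) (hm : 0 < m)
    (Q : Matrix (Fin n) (Fin n) ℝ) (hQsymm : Q.IsSymm)
    (B : Matrix (Fin m) (Fin n) ℝ)
    (H : Matrix (Fin n) (Fin n) ℝ) (hHsymm : H.IsSymm) (hHneg : (-H).PosDef)
    (lam : ℝ) (hlam : 0 ≤ lam) (c b : Fin n → ℝ)
    (μ : ℝ) (hμ : 0 < μ)
    (ςb σb : ℝ) (hςb : -lam < ςb) (hσb : 0 < σb)
    (hpd : (Gmu Q B H μ ςb σb).PosDef)
    (xbar : Fin n → ℝ) (hxbar : xbar = (Gmu Q B H μ ςb σb)⁻¹ *ᵥ (c - σb • b))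
    (hcrit : HasFDerivAt (fun p : ℝ × ℝ => Pd Q B H lam c b μ p.1 p.2)
      (0 : ℝ × ℝ →L[ℝ] ℝ) (ςb, σb)) :
    ςb = (1/2) * ((B *ᵥ xbar) ⬝ᵥ (B *ᵥ xbar)) - lam ∧
    hfun H b xbar = 1/μ ∧
    Pd Q B H lam c b μ ςb σb = qfun Q c xbar + μ * gfun B lam xbar := by
  obtain ⟨hptEq, -⟩ := Pd_eq_Xi Q B H lam c b μ ςb σb hpd
  rw [← hxbar] at hptEq
  have hBB : ∀ z : Fin n → ℝ, z ⬝ᵥ ((Bᵀ * B) *ᵥ z) = (B *ᵥ z) ⬝ᵥ (B *ᵥ z) := by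
    intro z
    rw [← Matrix.mulVec_mulVec, Matrix.dotProduct_mulVec, Matrix.vecMul_transpose]
  have hXipoly : ∀ ς σ : ℝ, Xi Q B H lam c b μ xbar ς σ
      = ((1/2) * (xbar ⬝ᵥ (Q *ᵥ xbar)) - c ⬝ᵥ xbar)
        + ((μ/2) * ((B *ᵥ xbar) ⬝ᵥ (B *ᵥ xbar)) - μ * lam) * ς
        + ((b ⬝ᵥ xbar) - (1/2) * (xbar ⬝ᵥ (H *ᵥ xbar)) + 1/μ) * σ
        - (μ/2) * (ς * ς) := by
    intro ς σ
    unfold Xi Gmu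
    simp only [Matrix.sub_mulVec, Matrix.add_mulVec, Matrix.smul_mulVec,
      dotProduct_sub, dotProduct_add, dotProduct_smul,
      sub_dotProduct, smul_dotProduct, hBB, smul_eq_mul]
    ring
  set L : ℝ × ℝ →L[ℝ] ℝ :=
    (((μ/2) * ((B *ᵥ xbar) ⬝ᵥ (B *ᵥ xbar)) - μ * lam - μ * ςb)
        • ContinuousLinearMap.fst ℝ ℝ ℝ)
      + (((b ⬝ᵥ xbar) - (1/2) * (xbar ⬝ᵥ (H *ᵥ xbar)) + 1/μ)
        • ContinuousLinearMap.snd ℝ ℝ ℝ) with hLdef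
  have hL : HasFDerivAt (fun p : ℝ × ℝ => Xi Q B H lam c b μ xbar p.1 p.2) L (ςb, σb) := by
    have hfunEq : (fun p : ℝ × ℝ => Xi Q B H lam c b μ xbar p.1 p.2)
        = fun p : ℝ × ℝ => ((1/2) * (xbar ⬝ᵥ (Q *ᵥ xbar)) - c ⬝ᵥ xbar)
          + ((μ/2) * ((B *ᵥ xbar) ⬝ᵥ (B *ᵥ xbar)) - μ * lam) * p.1
          + ((b ⬝ᵥ xbar) - (1/2) * (xbar ⬝ᵥ (H *ᵥ xbar)) + 1/μ) * p.2
          - (μ/2) * (p.1 * p.1) := funext fun p => hXipoly p.1 p.2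
    rw [hfunEq]
    have h1 : HasFDerivAt (fun p : ℝ × ℝ => p.1) (ContinuousLinearMap.fst ℝ ℝ ℝ) (ςb, σb) :=
      hasFDerivAt_fst
    have h2 : HasFDerivAt (fun p : ℝ × ℝ => p.2) (ContinuousLinearMap.snd ℝ ℝ ℝ) (ςb, σb) :=
      hasFDerivAt_snd
    have hc : HasFDerivAt (fun _ : ℝ × ℝ => (1/2) * (xbar ⬝ᵥ (Q *ᵥ xbar)) - c ⬝ᵥ xbar)
        (0 : ℝ × ℝ →L[ℝ] ℝ) (ςb, σb) := hasFDerivAt_const _ _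
    have hbig := ((hc.add (h1.const_mul ((μ/2) * ((B *ᵥ xbar) ⬝ᵥ (B *ᵥ xbar)) - μ * lam))).add
        (h2.const_mul ((b ⬝ᵥ xbar) - (1/2) * (xbar ⬝ᵥ (H *ᵥ xbar)) + 1/μ))).sub
        ((h1.mul h1).const_mul (μ/2))
    refine hbig.congr_fderiv ?_
    refine ContinuousLinearMap.ext fun v => ?_
    simp [hLdef]
    ring
  have hnb := posdef_nbhd hn Q hQsymm B H hHsymm μ ςb σb hpd
  have hmax : IsLocalMax (fun p : ℝ × ℝ =>
      Pd Q B H lam c b μ p.1 p.2 - Xi Q B H lam c b μ xbar p.1 p.2) (ςb, σb) := by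
    filter_upwards [hnb] with p hp
    obtain ⟨he, hm⟩ := Pd_eq_Xi Q B H lam c b μ p.1 p.2 hp
    have hle : Pd Q B H lam c b μ p.1 p.2 ≤ Xi Q B H lam c b μ xbar p.1 p.2 :=
      he.le.trans (hm xbar)
    rw [hptEq]
    simpa using hle
  have hd0 : ((0 : ℝ × ℝ →L[ℝ] ℝ) - L) = 0 := hmax.hasFDerivAt_eq_zero (hcrit.sub hL)
  have hL0 : L = 0 := by rwa [zero_sub, neg_eq_zero] at hd0
  have e1 : (μ/2) * ((B *ᵥ xbar) ⬝ᵥ (B *ᵥ xbar)) - μ * lam - μ * ςb = 0 := by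
    have := DFunLike.congr_fun hL0 (1, 0)
    simpa [hLdef] using this
  have e2 : (b ⬝ᵥ xbar) - (1/2) * (xbar ⬝ᵥ (H *ᵥ xbar)) + 1/μ = 0 := by
    have := DFunLike.congr_fun hL0 (0, 1)
    simpa [hLdef] using this
  have hς : ςb = (1/2) * ((B *ᵥ xbar) ⬝ᵥ (B *ᵥ xbar)) - lam := by
    have hfac : μ * ((1/2) * ((B *ᵥ xbar) ⬝ᵥ (B *ᵥ xbar)) - lam - ςb) = 0 := by
      linear_combination e1
    rcases mul_eq_zero.mp hfac with h | h
    · exact absurd h hμ.ne'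
    · linarith
  refine ⟨hς, ?_, ?_⟩
  · unfold hfun
    linarith [e2]
  · rw [hptEq, hXipoly ςb σb]
    unfold qfun gfun
    linear_combination σb * e2
      - (μ/2) * (ςb - ((1/2) * ((B *ᵥ xbar) ⬝ᵥ (B *ᵥ xbar)) - lam)) * hς
end
end

section
/- (Corollary 1) Suppose for every μ ∈ [μ₀, 1/δ] there is a pair (ς_μ,σ_μ) ∈ S_μ⁺ such that, with x_μ = G_μ(ς_μ,σ_μ)⁻¹(c − σ_μ b), one has ς_μ = ½|Bx_μ|² − λ and h(x_μ) = 1/μ. Then the infimum of P₀(x) over x ∈ X equals the infimum over μ ∈ [μ₀, 1/δ] of P^d_μ(ς_μ,σ_μ). -/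
open Matrix Set Filter

noncomputable section

variable {n m : ℕ}

lemma quad_nonneg {M : Matrix (Fin n) (Fin n) ℝ} (hM : M.PosSemidef) (x : Fin n → ℝ) :
    0 ≤ x ⬝ᵥ (M *ᵥ x) := by
  simpa using hM.re_dotProduct_nonneg x

lemma dot_symm (M : Matrix (Fin n) (Fin n) ℝ) (hM : M.IsSymm) (x y : Fin n → ℝ) :
    x ⬝ᵥ (M *ᵥ y) = y ⬝ᵥ (M *ᵥ x) := by
  rw [Matrix.dotProduct_mulVec, ← Matrix.mulVec_transpose, hM.eq, dotProduct_comm]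

lemma posdef_apply_inv {G : Matrix (Fin n) (Fin n) ℝ} (hG : G.PosDef) (v : Fin n → ℝ) :
    G *ᵥ (G⁻¹ *ᵥ v) = v := by
  rw [Matrix.mulVec_mulVec, Matrix.mul_nonsing_inv _ hG.det_pos.ne'.isUnit, Matrix.one_mulVec]

lemma dot_tmul (B : Matrix (Fin m) (Fin n) ℝ) (x y : Fin n → ℝ) :
    x ⬝ᵥ ((Bᵀ * B) *ᵥ y) = (B *ᵥ x) ⬝ᵥ (B *ᵥ y) := by
  rw [← Matrix.mulVec_mulVec, Matrix.dotProduct_mulVec, Matrix.vecMul_transpose]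

lemma Gmu_symm (Q : Matrix (Fin n) (Fin n) ℝ) (hQ : Q.IsSymm) (B : Matrix (Fin m) (Fin n) ℝ)
    (H : Matrix (Fin n) (Fin n) ℝ) (hH : H.IsSymm) (μ ς σ : ℝ) :
    (Gmu Q B H μ ς σ).IsSymm := by
  unfold Matrix.IsSymm Gmu
  rw [transpose_sub, transpose_add, transpose_smul, transpose_smul, transpose_mul,
    transpose_transpose, hQ.eq, hH.eq]

lemma dot_G (Q : Matrix (Fin n) (Fin n) ℝ) (B : Matrix (Fin m) (Fin n) ℝ)
    (H : Matrix (Fin n) (Fin n) ℝ) (μ ς σ : ℝ) (x y : Fin n → ℝ) :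
    x ⬝ᵥ (Gmu Q B H μ ς σ *ᵥ y)
      = x ⬝ᵥ (Q *ᵥ y) + (μ * ς) * ((B *ᵥ x) ⬝ᵥ (B *ᵥ y)) - σ * (x ⬝ᵥ (H *ᵥ y)) := by
  rw [Gmu, Matrix.sub_mulVec, Matrix.add_mulVec, Matrix.smul_mulVec,
    Matrix.smul_mulVec, dotProduct_sub, dotProduct_add, dotProduct_smul,
    dotProduct_smul, dot_tmul, smul_eq_mul, smul_eq_mul]

/-- h is maximized at H⁻¹b. -/
lemma h_max {H : Matrix (Fin n) (Fin n) ℝ} (hH : H.IsSymm) (hHneg : (-H).PosDef)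
    (b x : Fin n → ℝ) : hfun H b x ≤ hfun H b (H⁻¹ *ᵥ b) := by
  set y := H⁻¹ *ᵥ b with hy
  have hHy : H *ᵥ y = b := by
    have : IsUnit H.det := by
      have h1 : (-H).det ≠ 0 := hHneg.det_pos.ne'
      have : H.det ≠ 0 := by
        intro h; apply h1; rw [Matrix.det_neg, h, mul_zero]
      exact this.isUnit
    rw [hy, Matrix.mulVec_mulVec, Matrix.mul_nonsing_inv _ this, Matrix.one_mulVec]
  have key : 0 ≤ (x - y) ⬝ᵥ ((-H) *ᵥ (x - y)) := quad_nonneg hHneg.posSemidef _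
  have e1 : x ⬝ᵥ (H *ᵥ y) = y ⬝ᵥ (H *ᵥ x) := dot_symm H hH x y
  have e2 : b ⬝ᵥ x = x ⬝ᵥ (H *ᵥ y) := by rw [hHy] at *; exact dotProduct_comm _ _
  have e3 : b ⬝ᵥ y = y ⬝ᵥ (H *ᵥ y) := by rw [← hHy]; exact dotProduct_comm _ _
  have expand : (x - y) ⬝ᵥ ((-H) *ᵥ (x - y))
      = -(x ⬝ᵥ (H *ᵥ x)) + 2 * (x ⬝ᵥ (H *ᵥ y)) - y ⬝ᵥ (H *ᵥ y) := by
    rw [Matrix.neg_mulVec, Matrix.mulVec_sub, sub_dotProduct]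
    simp only [dotProduct_neg, dotProduct_sub]
    rw [e1]; ring
  rw [expand] at key
  simp only [hfun]
  rw [e2, e3]
  nlinarith [key]

/-- Weak duality. -/
lemma weak_dual (Q : Matrix (Fin n) (Fin n) ℝ) (hQ : Q.IsSymm) (B : Matrix (Fin m) (Fin n) ℝ)
    (H : Matrix (Fin n) (Fin n) ℝ) (hH : H.IsSymm) (lam μ ς σ : ℝ) (c b : Fin n → ℝ)
    (hμ : 0 < μ) (hσ : 0 ≤ σ) (hG : (Gmu Q B H μ ς σ).PosDef)
    (x : Fin n → ℝ) (hx : 1/μ ≤ hfun H b x) :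
    Pd Q B H lam c b μ ς σ ≤ qfun Q c x + μ * gfun B lam x := by
  set G := Gmu Q B H μ ς σ with hGdef
  set xs := G⁻¹ *ᵥ (c - σ • b) with hxs
  have hGxs : G *ᵥ xs = c - σ • b := posdef_apply_inv hG _
  -- Pd = -1/2 * ((c - σ•b) ⬝ᵥ xs) - ...
  have hPd : Pd Q B H lam c b μ ς σ
      = -(1/2) * ((c - σ • b) ⬝ᵥ xs) - μ * lam * ς - (μ/2) * ς^2 + σ/μ := rfl
  -- Xi(x) ≥ Xi(xs) = Pd
  have hsymm := Gmu_symm Q hQ B H hH μ ς σ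
  have hd1 : (c - σ • b) ⬝ᵥ x = xs ⬝ᵥ (G *ᵥ x) := by
    rw [← hGxs, dot_symm G hsymm, dotProduct_comm]
  have hd2 : (c - σ • b) ⬝ᵥ xs = xs ⬝ᵥ (G *ᵥ xs) := by
    rw [← hGxs]; exact dotProduct_comm _ _
  have hquad : 0 ≤ (x - xs) ⬝ᵥ (G *ᵥ (x - xs)) := quad_nonneg hG.posSemidef _
  have hexp : (x - xs) ⬝ᵥ (G *ᵥ (x - xs))
      = x ⬝ᵥ (G *ᵥ x) - 2 * (xs ⬝ᵥ (G *ᵥ x)) + xs ⬝ᵥ (G *ᵥ xs) := by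
    rw [Matrix.mulVec_sub, sub_dotProduct]
    simp only [dotProduct_sub]
    rw [dot_symm G hsymm x xs]; ring
  have hdotG := dot_G Q B H μ ς σ x x
  have hsb : (c - σ • b) ⬝ᵥ x = c ⬝ᵥ x - σ * (b ⬝ᵥ x) := by
    rw [sub_dotProduct, smul_dotProduct, smul_eq_mul]
  rw [hd1] at hsb
  have hσh : σ * (1/μ - hfun H b x) ≤ 0 :=
    mul_nonpos_of_nonneg_of_nonpos hσ (by linarith)
  rw [hPd, hd2]
  simp only [qfun, gfun, hfun] at hσh ⊢
  rw [← hGdef] at hdotG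
  rw [hexp] at hquad
  set t := (1/2) * ((B *ᵥ x) ⬝ᵥ (B *ᵥ x)) - lam with ht
  have hBx : (B *ᵥ x) ⬝ᵥ (B *ᵥ x) = 2 * (t + lam) := by rw [ht]; ring
  clear_value t
  rw [hBx] at hdotG
  have hsq : μ * (ς * t - ς^2/2) ≤ μ * (t^2/2) := by
    have h0 : 0 ≤ (ς - t)^2 := sq_nonneg _
    have : ς * t - ς^2/2 ≤ t^2/2 := by nlinarith
    exact mul_le_mul_of_nonneg_left this hμ.le
  have h1 : σ/μ - σ*((1/2) * (x ⬝ᵥ (H *ᵥ x))) + σ*(b ⬝ᵥ x) ≤ 0 := by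
    have he : σ * (1/μ - (1 / 2 * x ⬝ᵥ (H *ᵥ x) - b ⬝ᵥ x))
        = σ/μ - σ*((1/2) * (x ⬝ᵥ (H *ᵥ x))) + σ*(b ⬝ᵥ x) := by ring
    linarith [he ▸ hσh]
  linarith [hquad, hsb, hdotG, h1, hsq]

/-- Strong duality at a stationary pair. -/
lemma strong_dual (Q : Matrix (Fin n) (Fin n) ℝ) (B : Matrix (Fin m) (Fin n) ℝ)
    (H : Matrix (Fin n) (Fin n) ℝ) (lam μ ς σ : ℝ) (c b : Fin n → ℝ)
    (hG : (Gmu Q B H μ ς σ).PosDef)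
    (xs : Fin n → ℝ) (hxs : xs = (Gmu Q B H μ ς σ)⁻¹ *ᵥ (c - σ • b))
    (hς : ς = (1/2) * ((B *ᵥ xs) ⬝ᵥ (B *ᵥ xs)) - lam)
    (hh : hfun H b xs = 1/μ) :
    Pd Q B H lam c b μ ς σ = qfun Q c xs + μ * gfun B lam xs := by
  have hGxs : Gmu Q B H μ ς σ *ᵥ xs = c - σ • b := by
    rw [hxs]; exact posdef_apply_inv hG _
  have hd2 : (c - σ • b) ⬝ᵥ xs = xs ⬝ᵥ (Gmu Q B H μ ς σ *ᵥ xs) := by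
    rw [← hGxs]; exact dotProduct_comm _ _
  have hdotG := dot_G Q B H μ ς σ xs xs
  have hs : (B *ᵥ xs) ⬝ᵥ (B *ᵥ xs) = 2*(ς + lam) := by rw [hς]; ring
  have hc : (c - σ • b) ⬝ᵥ xs = c ⬝ᵥ xs - σ * (b ⬝ᵥ xs) := by
    rw [sub_dotProduct, smul_dotProduct, smul_eq_mul]
  have e1 : c ⬝ᵥ xs - σ * (b ⬝ᵥ xs)
      = xs ⬝ᵥ (Q *ᵥ xs) + μ*ς*(2*(ς+lam)) - σ*(xs ⬝ᵥ (H *ᵥ xs)) := by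
    rw [← hc, hd2, hdotG, hs]
  have e2 : (1/2)*(xs ⬝ᵥ (H *ᵥ xs)) - b ⬝ᵥ xs = 1/μ := hh
  have e3 : σ*((1/2)*(xs ⬝ᵥ (H *ᵥ xs))) - σ*(b ⬝ᵥ xs) = σ/μ := by
    have h4 : σ*((1/2)*(xs ⬝ᵥ (H *ᵥ xs)) - b ⬝ᵥ xs) = σ*(1/μ) := by rw [e2]
    have h5 : σ*(1/μ) = σ/μ := by ring
    linarith [h4, h5]
  simp only [Pd, qfun, gfun]
  rw [← hxs, hc, ← hς]
  linarith [e1, e3]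

/-- Corollary 1: if for every `μ ∈ [μ₀, 1/δ]` there is a stationary
dual pair `(ς_μ, σ_μ) ∈ S_μ⁺`, then
`inf_{x ∈ X} P₀(x) = inf_{μ ∈ [μ₀,1/δ]} P^d_μ(ς_μ, σ_μ)`. -/
theorem stmt_16 {n m : ℕ} (hn : 0 < n) (hm : 0 < m)
    (Q : Matrix (Fin n) (Fin n) ℝ) (hQsymm : Q.IsSymm)
    (B : Matrix (Fin m) (Fin n) ℝ)
    (H : Matrix (Fin n) (Fin n) ℝ) (hHsymm : H.IsSymm) (hHneg : (-H).PosDef)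
    (lam : ℝ) (hlam : 0 ≤ lam) (c b : Fin n → ℝ)
    (hpos : 0 < hfun H b (H⁻¹ *ᵥ b))
    (μ₀ : ℝ) (hμ₀ : μ₀ = 1 / hfun H b (H⁻¹ *ᵥ b))
    (δ : ℝ) (hδ : 0 < δ) (hδle : δ ≤ hfun H b (H⁻¹ *ᵥ b))
    (ς σ : ℝ → ℝ)
    (hsta : ∀ μ ∈ Icc μ₀ (1/δ), (ς μ, σ μ) ∈ Smu Q B H lam μ ∧
      (let xμ := (Gmu Q B H μ (ς μ) (σ μ))⁻¹ *ᵥ (c - σ μ • b)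
       ς μ = (1/2) * ((B *ᵥ xμ) ⬝ᵥ (B *ᵥ xμ)) - lam ∧ hfun H b xμ = 1/μ)) :
    sInf ((fun x => qfun Q c x + gfun B lam x / hfun H b x) ''
        {x : Fin n → ℝ | δ ≤ hfun H b x}) =
      sInf ((fun μ => Pd Q B H lam c b μ (ς μ) (σ μ)) '' Icc μ₀ (1/δ)) := by
  have hμ₀pos : 0 < μ₀ := by rw [hμ₀]; positivity
  have hμ₀le : μ₀ ≤ 1/δ := by rw [hμ₀]; exact one_div_le_one_div_of_le hδ hδle
  set S1 := (fun x => qfun Q c x + gfun B lam x / hfun H b x) ''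
      {x : Fin n → ℝ | δ ≤ hfun H b x} with hS1
  set S2 := (fun μ => Pd Q B H lam c b μ (ς μ) (σ μ)) '' Icc μ₀ (1/δ) with hS2
  -- S2 ⊆ S1
  have hsub : S2 ⊆ S1 := by
    rintro v ⟨μ, hμmem, rfl⟩
    have hμpos : 0 < μ := lt_of_lt_of_le hμ₀pos hμmem.1
    obtain ⟨⟨-, hσ0, hG⟩, hst⟩ := hsta μ hμmem
    obtain ⟨hςeq, hheq⟩ := hst
    set xμ := (Gmu Q B H μ (ς μ) (σ μ))⁻¹ *ᵥ (c - σ μ • b) with hxμ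
    have hstrong := strong_dual Q B H lam μ (ς μ) (σ μ) c b hG xμ hxμ hςeq hheq
    have hfeas : δ ≤ hfun H b xμ := by
      rw [hheq]
      have h1 : μ * δ ≤ 1 := (le_div_iff₀ hδ).mp hμmem.2
      exact (le_div_iff₀ hμpos).mpr (by linarith)
    refine ⟨xμ, hfeas, ?_⟩
    show qfun Q c xμ + gfun B lam xμ / hfun H b xμ = Pd Q B H lam c b μ (ς μ) (σ μ)
    rw [hheq, one_div, div_inv_eq_mul, hstrong, mul_comm]
  -- every element of S1 dominates some element of S2
  have hdom : ∀ v ∈ S1, ∃ w ∈ S2, w ≤ v := by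
    rintro v ⟨x, hx, rfl⟩
    simp only [mem_setOf_eq] at hx
    have hxpos : 0 < hfun H b x := lt_of_lt_of_le hδ hx
    set μx := 1 / hfun H b x with hμx
    have hμxpos : 0 < μx := by positivity
    have hμxmem : μx ∈ Icc μ₀ (1/δ) := by
      constructor
      · rw [hμ₀, hμx]
        exact one_div_le_one_div_of_le hxpos (h_max hHsymm hHneg b x)
      · rw [hμx]
        exact one_div_le_one_div_of_le hδ hx
    obtain ⟨⟨-, hσ0, hG⟩, -⟩ := hsta μx hμxmem
    have hweak := weak_dual Q hQsymm B H hHsymm lam μx (ς μx) (σ μx) c b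
      hμxpos hσ0 hG x (by rw [hμx, one_div_one_div])
    refine ⟨Pd Q B H lam c b μx (ς μx) (σ μx), ⟨μx, hμxmem, rfl⟩, ?_⟩
    have : μx * gfun B lam x = gfun B lam x / hfun H b x := by
      rw [hμx]; ring
    linarith [hweak, this]
  have hne2 : S2.Nonempty := ⟨_, ⟨μ₀, ⟨le_refl _, hμ₀le⟩, rfl⟩⟩
  have hne1 : S1.Nonempty := hne2.mono hsub
  by_cases hbdd : BddBelow S2
  · have hbdd1 : BddBelow S1 := by
      obtain ⟨L, hL⟩ := hbdd
      refine ⟨L, fun v hv => ?_⟩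
      obtain ⟨w, hw, hle⟩ := hdom v hv
      exact le_trans (hL hw) hle
    refine le_antisymm (csInf_le_csInf hbdd1 hne2 hsub) ?_
    refine le_csInf hne1 fun v hv => ?_
    obtain ⟨w, hw, hle⟩ := hdom v hv
    exact le_trans (csInf_le hbdd hw) hle
  · have hbdd1 : ¬ BddBelow S1 := fun h => hbdd (h.mono hsub)
    rw [Real.sInf_of_not_bddBelow hbdd1, Real.sInf_of_not_bddBelow hbdd]
end
end
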